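/- Let R be a (not necessarily commutative) ring with identity whose additive group is finitely generated, and let S ⊆ R be a subring (containing 1) such that the additive group of S has finite index in the additive group of R. Then for every m ≥ 1, the inclusion S ↪ R induces an injective group homomorphism from the unit group of the matrix ring Mat_m(S) to the unit group of Mat_m(R), i.e. GL_m(S) → GL_m(R), whose image is a finite-index subgroup of GL_m(R). -/

import Mathlib

open scoped Classical

lemma key_lemma {A B : Type*} [Ring A] [Ring B] (hfg : AddGroup.FG A) (f : B →+* A)
    (hf : Function.Injective f)
    (hidx : (f.toAddMonoidHom.range).index ≠ 0) :
    Function.Injective (Units.map f.toMonoidHom) ∧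
    (Units.map f.toMonoidHom).range.index ≠ 0 := by
  constructor
  · intro u v h
    ext
    exact hf (by simpa using congrArg (fun w : Aˣ => (w : A)) h)
  · set T : AddSubgroup A := f.toAddMonoidHom.range with hT
    set n : ℕ := T.index with hn
    have hn0 : n ≠ 0 := hidx
    have hnT : ∀ a : A, n • a ∈ T := fun a => AddSubgroup.nsmul_index_mem T a
    set φ : A →+ A := AddMonoidHom.mk' (fun a => n • a) (fun a b => smul_add n a b) with hφ
    set I : AddSubgroup A := φ.range with hI
    have hIT : I ≤ T := by
      rintro x ⟨a, rfl⟩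
      exact hnT a
    have hmulI : ∀ (a : A) {x : A}, x ∈ I → a * x ∈ I := by
      rintro a x ⟨b, rfl⟩
      refine ⟨a * b, ?_⟩
      show n • (a * b) = a * (n • b)
      exact (mul_smul_comm n a b).symm
    have hfgQ : AddGroup.FG (A ⧸ I) := by
      have := hfg
      exact AddGroup.fg_of_surjective (QuotientAddGroup.mk'_surjective I)
    have htor : AddMonoid.IsTorsion (A ⧸ I) := by
      intro g
      obtain ⟨a, rfl⟩ := QuotientAddGroup.mk'_surjective I g
      rw [isOfFinAddOrder_iff_nsmul_eq_zero]
      refine ⟨n, Nat.pos_of_ne_zero hn0, ?_⟩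
      rw [← map_nsmul]
      exact (QuotientAddGroup.eq_zero_iff _).2 ⟨a, rfl⟩
    have hQfin : Finite (A ⧸ I) := AddCommGroup.finite_of_fg_torsion _ htor
    set H : Subgroup Aˣ := (Units.map f.toMonoidHom).range with hH
    have hkey : ∀ w : Aˣ, (w : A) - 1 ∈ I → ((w⁻¹ : Aˣ) : A) - 1 ∈ I → w ∈ H := by
      intro w h1 h2
      have h1T : (w : A) ∈ T := by
        have := T.add_mem (hIT h1) (⟨1, map_one f⟩ : (1:A) ∈ T)
        simpa using this
      have h2T : ((w⁻¹ : Aˣ) : A) ∈ T := by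
        have := T.add_mem (hIT h2) (⟨1, map_one f⟩ : (1:A) ∈ T)
        simpa using this
      obtain ⟨b, hb⟩ := h1T
      obtain ⟨c, hc⟩ := h2T
      have hb' : f b = (w : A) := hb
      have hc' : f c = ((w⁻¹ : Aˣ) : A) := hc
      have hbc : b * c = 1 := by
        apply hf
        rw [map_mul, map_one, hb', hc']
        exact w.mul_inv
      have hcb : c * b = 1 := by
        apply hf
        rw [map_mul, map_one, hb', hc']
        exact w.inv_mul
      refine ⟨⟨b, c, hbc, hcb⟩, ?_⟩
      ext
      exact hb'
    set F : Aˣ → (A ⧸ I) × (A ⧸ I) :=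
      fun u => (QuotientAddGroup.mk' I u, QuotientAddGroup.mk' I (↑u⁻¹)) with hF
    have hcoset : ∀ u v : Aˣ, F u = F v →
        QuotientGroup.mk (s := H) u = QuotientGroup.mk v := by
      intro u v huv
      have h1 : ((v : A) - u) ∈ I := by
        have h := congrArg Prod.fst huv
        exact QuotientAddGroup.eq_iff_sub_mem.mp h.symm
      rw [QuotientGroup.eq]
      apply hkey
      · have e : ((u⁻¹ * v : Aˣ) : A) - 1 = ((u⁻¹ : Aˣ) : A) * ((v : A) - (u : A)) := by
          rw [mul_sub, Units.val_mul]
          simp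
        rw [e]
        exact hmulI _ h1
      · have e : (((u⁻¹ * v)⁻¹ : Aˣ) : A) - 1 = ((v⁻¹ : Aˣ) : A) * ((u : A) - (v : A)) := by
          rw [mul_inv_rev, mul_sub, Units.val_mul]
          simp
        rw [e]
        exact hmulI _ (by simpa using I.neg_mem h1)
    have hg : Function.Surjective
        (fun p : (A ⧸ I) × (A ⧸ I) =>
          if h : ∃ u : Aˣ, F u = p then (QuotientGroup.mk (s := H) h.choose) else (QuotientGroup.mk (s := H) 1)) := by
      intro q
      obtain ⟨u, rfl⟩ := QuotientGroup.mk_surjective q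
      refine ⟨F u, ?_⟩
      have h : ∃ w : Aˣ, F w = F u := ⟨u, rfl⟩
      simp only [dif_pos h]
      exact hcoset _ _ h.choose_spec
    have : Finite (Aˣ ⧸ H) := Finite.of_surjective _ hg
    exact Subgroup.index_ne_zero_of_finite

theorem stmt18 {R : Type*} [Ring R] (hfg : AddGroup.FG R)
    (S : Subring R) (hidx : S.toAddSubgroup.index ≠ 0)
    (m : ℕ) (hm : 1 ≤ m) :
    Function.Injective
      (Units.map (S.subtype.mapMatrix :
          Matrix (Fin m) (Fin m) ↥S →+* Matrix (Fin m) (Fin m) R).toMonoidHom) ∧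
    (Units.map (S.subtype.mapMatrix :
          Matrix (Fin m) (Fin m) ↥S →+* Matrix (Fin m) (Fin m) R).toMonoidHom).range.index ≠ 0 := by
  set f : Matrix (Fin m) (Fin m) ↥S →+* Matrix (Fin m) (Fin m) R := S.subtype.mapMatrix with hf
  have hfgM : AddGroup.FG (Matrix (Fin m) (Fin m) R) := by
    haveI h1 : Module.Finite ℤ R := Module.Finite.iff_addGroup_fg.mpr hfg
    haveI h2 : Module.Finite ℤ (Matrix (Fin m) (Fin m) R) :=
      Module.Finite.equiv (Matrix.ofLinearEquiv ℤ).symm.symm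
    exact Module.Finite.iff_addGroup_fg.mp h2
  have hinj : Function.Injective f := by
    intro M N h
    ext i j
    have h2 : f M i j = f N i j := by rw [h]
    exact h2
  have hfinQ : Finite (R ⧸ S.toAddSubgroup) := Nat.finite_of_card_ne_zero hidx
  set pi : Matrix (Fin m) (Fin m) R →+ Matrix (Fin m) (Fin m) (R ⧸ S.toAddSubgroup) :=
    (QuotientAddGroup.mk' S.toAddSubgroup).mapMatrix with hpi
  have hpisurj : Function.Surjective pi := by
    intro N
    refine ⟨Matrix.of fun i j => Quotient.out (N i j), ?_⟩
    ext i j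
    simp [hpi, AddMonoidHom.mapMatrix_apply, Matrix.map_apply]
  have hker : pi.ker = f.toAddMonoidHom.range := by
    ext x
    constructor
    · intro hx
      have hx' : ∀ i j, x i j ∈ S := by
        intro i j
        have : pi x i j = 0 := by rw [hx]; rfl
        exact (QuotientAddGroup.eq_zero_iff _).mp this
      exact ⟨Matrix.of fun i j => (⟨x i j, hx' i j⟩ : ↥S), by ext i j; rfl⟩
    · rintro ⟨M, rfl⟩
      show pi (f M) = 0
      ext i j
      have : (f M) i j = (M i j : R) := rfl
      simp only [hpi, AddMonoidHom.mapMatrix_apply, Matrix.map_apply, this]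
      exact (QuotientAddGroup.eq_zero_iff _).mpr (M i j).2
  have hidxM : (f.toAddMonoidHom.range).index ≠ 0 := by
    have e := QuotientAddGroup.quotientKerEquivOfSurjective pi hpisurj
    have hfin : Finite (Matrix (Fin m) (Fin m) R ⧸ pi.ker) :=
      Finite.of_equiv _ e.symm.toEquiv
    rw [← hker]
    exact AddSubgroup.index_ne_zero_of_finite
  exact key_lemma hfgM f hinj hidxM
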